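/- Abstract continuity theorem: on a compact convex subset K of ℝⁿ with a convex distance D (metric, convex in each argument), any convex bounded functional E : K → ℝ≥0 gives rise to a function (ε,ρ) ↦ E_ε(ρ) := inf{E(σ) : D(ρ,σ) ≤ ε} that is jointly continuous on (0,∞) × K. -/

import Mathlib

open Set Metric

set_option maxHeartbeats 1000000

/-- Abstract continuity theorem: on a compact convex `K ⊆ ℝⁿ` with a convex metric `D`,
any convex bounded nonnegative functional `E` gives rise to
`(ε,ρ) ↦ E_ε(ρ) = inf{E(σ) : σ ∈ K, D(ρ,σ) ≤ ε}` jointly continuous on `(0,∞) × K`. -/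
theorem stmt6 {n : ℕ}
    (K : Set (EuclideanSpace ℝ (Fin n))) (hKne : K.Nonempty)
    (hK : IsCompact K) (hKc : Convex ℝ K)
    (D : EuclideanSpace ℝ (Fin n) → EuclideanSpace ℝ (Fin n) → ℝ)
    (hDnn : ∀ ρ σ, 0 ≤ D ρ σ) (hD0 : ∀ ρ σ, D ρ σ = 0 ↔ ρ = σ)
    (hDsymm : ∀ ρ σ, D ρ σ = D σ ρ)
    (hDtri : ∀ ρ σ τ, D ρ τ ≤ D ρ σ + D σ τ)
    (hDconv : ∀ σ₁ ∈ K, ∀ σ₂ ∈ K, ∀ ρ ∈ K, ∀ p : ℝ, 0 ≤ p → p ≤ 1 →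
      D (p • σ₁ + (1 - p) • σ₂) ρ ≤ p * D σ₁ ρ + (1 - p) * D σ₂ ρ)
    (E : EuclideanSpace ℝ (Fin n) → ℝ) (hEnn : ∀ σ ∈ K, 0 ≤ E σ)
    (M : ℝ) (hM : ∀ σ ∈ K, E σ ≤ M)
    (hEconv : ∀ σ₁ ∈ K, ∀ σ₂ ∈ K, ∀ p : ℝ, 0 ≤ p → p ≤ 1 →
      E (p • σ₁ + (1 - p) • σ₂) ≤ p * E σ₁ + (1 - p) * E σ₂) :
    ContinuousOn
      (fun q : ℝ × EuclideanSpace ℝ (Fin n) => sInf (E '' {σ ∈ K | D q.2 σ ≤ q.1}))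
      (Set.Ioi (0:ℝ) ×ˢ K) := by
  classical
  -- direction of the affine span
  set V : Submodule ℝ (EuclideanSpace ℝ (Fin n)) := (affineSpan ℝ K).direction with hV
  have hdir : ∀ x ∈ K, ∀ y ∈ K, x - y ∈ V := by
    intro x hx y hy
    have := AffineSubspace.vsub_mem_direction (subset_affineSpan ℝ K hx) (subset_affineSpan ℝ K hy)
    simpa [hV] using this
  -- a "deep" point c
  obtain ⟨c, hcK, r₀, hr₀, hdeepc⟩ :
      ∃ c ∈ K, ∃ r₀ > 0, ∀ v ∈ V, ‖v‖ ≤ r₀ → c + v ∈ K := by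
    obtain ⟨c, hcI⟩ := hKne.intrinsicInterior hKc
    obtain ⟨c₀, hc₀, rfl⟩ := mem_intrinsicInterior.mp hcI
    have hnhds : ((↑) ⁻¹' K : Set (affineSpan ℝ K)) ∈ nhds c₀ := mem_interior_iff_mem_nhds.mp hc₀
    obtain ⟨U, hU, hUsub⟩ := (mem_nhds_subtype _ c₀ _).mp hnhds
    obtain ⟨r, hr, hball⟩ := Metric.mem_nhds_iff.mp hU
    refine ⟨c₀, ?_, r/2, by positivity, ?_⟩
    · exact Set.mem_preimage.mp (interior_subset hc₀)
    · intro v hv hvn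
      have hmem : (c₀ : EuclideanSpace ℝ (Fin n)) + v ∈ affineSpan ℝ K := by
        have := AffineSubspace.vadd_mem_of_mem_direction (s := affineSpan ℝ K) hv c₀.2
        simpa [add_comm] using this
      have hb : (c₀ : EuclideanSpace ℝ (Fin n)) + v ∈ U := by
        apply hball
        simp only [mem_ball, dist_eq_norm, add_sub_cancel_left]
        linarith
      exact hUsub (show (⟨(c₀ : EuclideanSpace ℝ (Fin n)) + v, hmem⟩ : affineSpan ℝ K) ∈ Subtype.val ⁻¹' U from hb)
  -- local boundedness of D c (c + ·) near 0
  obtain ⟨r', hr'pos, hr'le, hCb⟩ :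
      ∃ r' > 0, r' ≤ r₀ ∧ ∀ v ∈ V, ‖v‖ ≤ r' → D c (c + v) ≤ 1 := by
    set S₀ : Set V := {v : V | c + (v : EuclideanSpace ℝ (Fin n)) ∈ K} with hS₀
    have hconvS : Convex ℝ S₀ := by
      intro x hx y hy a b ha hb hab
      simp only [hS₀, Set.mem_setOf_eq] at *
      have heq : c + ((a • x + b • y : V) : EuclideanSpace ℝ (Fin n))
          = a • (c + (x : EuclideanSpace ℝ (Fin n))) + b • (c + (y : EuclideanSpace ℝ (Fin n))) := by
        push_cast
        match_scalars <;> linarith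
      rw [heq]
      exact hKc hx hy ha hb hab
    have hg : ConvexOn ℝ S₀ (fun v : V => D c (c + (v : EuclideanSpace ℝ (Fin n)))) := by
      refine ⟨hconvS, ?_⟩
      intro x hx y hy a b ha hb hab
      simp only
      have heq : c + ((a • x + b • y : V) : EuclideanSpace ℝ (Fin n))
          = a • (c + (x : EuclideanSpace ℝ (Fin n))) + b • (c + (y : EuclideanSpace ℝ (Fin n))) := by
        push_cast
        match_scalars <;> linarith
      have hb' : b = 1 - a := by linarith
      subst hb'
      rw [heq, hDsymm]
      calc D (a • (c + (x:EuclideanSpace ℝ (Fin n))) + (1-a) • (c + (y:EuclideanSpace ℝ (Fin n)))) c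
          ≤ a * D (c + (x:EuclideanSpace ℝ (Fin n))) c + (1-a) * D (c + (y:EuclideanSpace ℝ (Fin n))) c :=
            hDconv _ hx _ hy c hcK a ha (by linarith)
        _ = a * D c (c + (x:EuclideanSpace ℝ (Fin n))) + (1-a) * D c (c + (y:EuclideanSpace ℝ (Fin n))) := by
            rw [hDsymm (c + (x:EuclideanSpace ℝ (Fin n))) c, hDsymm (c + (y:EuclideanSpace ℝ (Fin n))) c]
    have h0 : (0 : V) ∈ interior S₀ := by
      rw [mem_interior_iff_mem_nhds, Metric.mem_nhds_iff]
      refine ⟨r₀, hr₀, ?_⟩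
      intro v hv
      simp only [mem_ball, dist_zero_right] at hv
      exact hdeepc (v : EuclideanSpace ℝ (Fin n)) v.2 hv.le
    have hct : ContinuousAt (fun v : V => D c (c + (v : EuclideanSpace ℝ (Fin n)))) 0 := by
      have hcont := ((hg.subset interior_subset hconvS.interior).continuousOn isOpen_interior)
      exact hcont.continuousAt (isOpen_interior.mem_nhds h0)
    have h00 : D c (c + ((0:V) : EuclideanSpace ℝ (Fin n))) = 0 := by
      simp only [Submodule.coe_zero, add_zero]
      exact (hD0 c c).mpr rfl
    have hnh : (fun v : V => D c (c + (v : EuclideanSpace ℝ (Fin n)))) ⁻¹' (Iio 1) ∈ nhds (0:V) := by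
      apply hct.preimage_mem_nhds
      rw [h00]
      exact Iio_mem_nhds one_pos
    obtain ⟨r1, hr1, hball1⟩ := Metric.mem_nhds_iff.mp hnh
    refine ⟨min (r1/2) r₀, by positivity, min_le_right _ _, ?_⟩
    intro v hv hvn
    have : (⟨v, hv⟩ : V) ∈ ball (0:V) r1 := by
      simp only [mem_ball, dist_zero_right]
      calc ‖(⟨v, hv⟩ : V)‖ = ‖v‖ := rfl
        _ ≤ min (r1/2) r₀ := hvn
        _ < r1 := by
            have := min_le_left (r1/2) r₀
            linarith
    exact (hball1 this).le
  -- cone lemma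
  have hcone : ∀ s : ℝ, 0 < s → ∀ z : EuclideanSpace ℝ (Fin n),
      (∀ v ∈ V, ‖v‖ ≤ s → z + v ∈ K) →
      ∀ C' : ℝ, (∀ v ∈ V, ‖v‖ ≤ s → D z (z + v) ≤ C') →
      ∀ x ∈ K, D z x ≤ C' * ‖x - z‖ / s := by
    intro s hs z hzdeep C' hC' x hx
    have hzK : z ∈ K := by simpa using hzdeep 0 (Submodule.zero_mem _) (by simp [hs.le])
    by_cases hxz : x = z
    · subst hxz
      simp only [sub_self, norm_zero, mul_zero, zero_div]
      exact le_of_eq ((hD0 x x).mpr rfl)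
    · have hn : 0 < ‖x - z‖ := norm_pos_iff.mpr (sub_ne_zero_of_ne hxz)
      have hu : (s/‖x - z‖) • (z - x) ∈ V := Submodule.smul_mem _ _ (hdir z hzK x hx)
      have hun : ‖(s/‖x - z‖) • (z - x)‖ = s := by
        rw [norm_smul, Real.norm_eq_abs, abs_of_pos (by positivity), norm_sub_rev z x]
        field_simp
      have hwK : z + (s/‖x - z‖) • (z - x) ∈ K := hzdeep _ hu (le_of_eq hun)
      have hDw : D z (z + (s/‖x - z‖) • (z - x)) ≤ C' := hC' _ hu (le_of_eq hun)
      set lam : ℝ := ‖x - z‖/(‖x - z‖ + s) with hlam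
      have hl0 : 0 ≤ lam := by positivity
      have hl1 : lam ≤ 1 := by
        rw [hlam, div_le_one (by positivity)]; linarith
      have hcomb : lam • (z + (s/‖x - z‖) • (z - x)) + (1 - lam) • x = z := by
        rw [hlam]
        match_scalars <;> field_simp <;> ring
      have h1 := hDconv _ hwK x hx x hx lam hl0 hl1
      rw [hcomb] at h1
      have hxx : D x x = 0 := (hD0 x x).mpr rfl
      have h2 : D (z + (s/‖x - z‖) • (z - x)) x
          ≤ D (z + (s/‖x - z‖) • (z - x)) z + D z x := hDtri _ _ _
      have h3 : D (z + (s/‖x - z‖) • (z - x)) z = D z (z + (s/‖x - z‖) • (z - x)) := hDsymm _ _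
      have h4 : D z x ≤ lam * (C' + D z x) := by nlinarith
      rw [hlam] at h4
      rw [div_mul_eq_mul_div, le_div_iff₀ (by positivity)] at h4
      rw [le_div_iff₀ hs]
      nlinarith
  -- global bound
  obtain ⟨B, hB0, hB⟩ : ∃ B > 0, ∀ x ∈ K, ∀ y ∈ K, D x y ≤ B := by
    obtain ⟨R, hR⟩ := hK.isBounded.subset_closedBall c
    have hR0 : 0 ≤ R := by
      have := hR hcK
      simpa using this
    have hdeep' : ∀ v ∈ V, ‖v‖ ≤ r' → c + v ∈ K := fun v hv hvn => hdeepc v hv (hvn.trans hr'le)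
    have hcb : ∀ x ∈ K, D c x ≤ 1 * ‖x - c‖ / r' := fun x hx => hcone r' hr'pos c hdeep' 1 hCb x hx
    refine ⟨2*R/r' + 1, by positivity, ?_⟩
    intro x hx y hy
    have h1 : D x y ≤ D x c + D c y := hDtri _ _ _
    have h2 : D x c = D c x := hDsymm _ _
    have h3 : D c x ≤ 1 * ‖x - c‖ / r' := hcb x hx
    have h4 : D c y ≤ 1 * ‖y - c‖ / r' := hcb y hy
    have h5 : ‖x - c‖ ≤ R := by
      have := hR hx
      simpa [mem_closedBall, dist_eq_norm] using this
    have h6 : ‖y - c‖ ≤ R := by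
      have := hR hy
      simpa [mem_closedBall, dist_eq_norm] using this
    have h7 : ‖x - c‖ / r' ≤ R / r' := by gcongr
    have h8 : ‖y - c‖ / r' ≤ R / r' := by gcongr
    rw [one_mul] at h3 h4
    have h9 : R / r' + R / r' = 2*R/r' := by ring
    linarith
  -- sphere bound from global bound
  have hsphere : ∀ s : ℝ, ∀ z : EuclideanSpace ℝ (Fin n),
      (∀ v ∈ V, ‖v‖ ≤ s → z + v ∈ K) → 0 < s →
      ∀ v ∈ V, ‖v‖ ≤ s → D z (z + v) ≤ B := by
    intro s z hzdeep hs v hv hvn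
    have hzK : z ∈ K := by simpa using hzdeep 0 (Submodule.zero_mem _) (by simp [hs.le])
    exact hB z hzK (z + v) (hzdeep v hv hvn)
  -- Lipschitz estimate at deep points
  have hlip : ∀ s : ℝ, 0 < s → ∀ σ : EuclideanSpace ℝ (Fin n),
      (∀ v ∈ V, ‖v‖ ≤ s → σ + v ∈ K) →
      ∀ x ∈ K, ∀ x₀ ∈ K, ‖x - x₀‖ ≤ s/2 →
      D x σ ≤ D x₀ σ + 5*B*‖x - x₀‖/s := by
    intro s hs σ hσdeep x hx x₀ hx₀ hd
    have hσK : σ ∈ K := by simpa using hσdeep 0 (Submodule.zero_mem _) (by simp [hs.le])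
    have hvV : x - x₀ ∈ V := hdir x hx x₀ hx₀
    have hσ'K : σ + (x - x₀) ∈ K := hσdeep _ hvV (by linarith)
    -- cone estimate at σ
    have hconeσ : D σ (σ + (x - x₀)) ≤ B * ‖x - x₀‖ / s := by
      have := hcone s hs σ hσdeep B (hsphere s σ hσdeep hs) (σ + (x - x₀)) hσ'K
      simpa [add_sub_cancel_left] using this
    -- midpoint m₀ and its deepness
    set m₀ : EuclideanSpace ℝ (Fin n) := (1/2 : ℝ) • x₀ + (1/2 : ℝ) • σ with hm₀
    have hm₀deep : ∀ w ∈ V, ‖w‖ ≤ s/2 → m₀ + w ∈ K := by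
      intro w hw hwn
      have h2w : σ + (2:ℝ) • w ∈ K := by
        apply hσdeep _ (Submodule.smul_mem _ _ hw)
        rw [norm_smul, Real.norm_eq_abs]
        rw [abs_of_nonneg (by norm_num)]
        linarith
      have heq : m₀ + w = (1/2 : ℝ) • x₀ + (1/2 : ℝ) • (σ + (2:ℝ) • w) := by
        rw [hm₀]; module
      rw [heq]
      exact hKc hx₀ h2w (by norm_num) (by norm_num) (by norm_num)
    have hm₀K : m₀ ∈ K := by simpa using hm₀deep 0 (Submodule.zero_mem _) (by simp; linarith)
    have hmxK : m₀ + (x - x₀) ∈ K := hm₀deep _ hvV hd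
    have hconem : D m₀ (m₀ + (x - x₀)) ≤ B * ‖x - x₀‖ / (s/2) := by
      have := hcone (s/2) (by linarith) m₀ hm₀deep B (hsphere (s/2) m₀ hm₀deep (by linarith)) (m₀ + (x - x₀)) hmxK
      simpa [add_sub_cancel_left] using this
    -- mx = m₀ + (x - x₀) is the midpoint of x and σ + (x - x₀)
    have hmxeq : (1/2 : ℝ) • (σ + (x - x₀)) + (1 - (1/2 : ℝ)) • x = m₀ + (x - x₀) := by
      rw [hm₀]; module
    have a1 : D x σ ≤ D x (m₀ + (x - x₀)) + D (m₀ + (x - x₀)) σ := hDtri _ _ _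
    have a2 : D (m₀ + (x - x₀)) x ≤ (1/2) * D (σ + (x - x₀)) x + (1 - (1/2 : ℝ)) * D x x := by
      have := hDconv _ hσ'K x hx x hx (1/2) (by norm_num) (by norm_num)
      rwa [hmxeq] at this
    have a3 : D x x = 0 := (hD0 x x).mpr rfl
    have a4 : D (σ + (x - x₀)) x ≤ D (σ + (x - x₀)) σ + D σ x := hDtri _ _ _
    have a5 : D (σ + (x - x₀)) σ = D σ (σ + (x - x₀)) := hDsymm _ _
    have a6 : D (m₀ + (x - x₀)) σ ≤ D (m₀ + (x - x₀)) m₀ + D m₀ σ := hDtri _ _ _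
    have a7 : D (m₀ + (x - x₀)) m₀ = D m₀ (m₀ + (x - x₀)) := hDsymm _ _
    have a8 : D m₀ σ ≤ (1/2) * D x₀ σ + (1 - (1/2 : ℝ)) * D σ σ := by
      have h := hDconv x₀ hx₀ σ hσK σ hσK (1/2) (by norm_num) (by norm_num)
      have heq2 : (1/2 : ℝ) • x₀ + (1 - (1/2 : ℝ)) • σ = m₀ := by rw [hm₀]; module
      rwa [heq2] at h
    have a9 : D σ σ = 0 := (hD0 σ σ).mpr rfl
    have a10 : D x (m₀ + (x - x₀)) = D (m₀ + (x - x₀)) x := hDsymm _ _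
    have a11 : D σ x = D x σ := hDsymm _ _
    have a12 : B * ‖x - x₀‖ / (s/2) = 2 * (B * ‖x - x₀‖ / s) := by
      field_simp
    have a13 : 5*B*‖x - x₀‖/s = 5 * (B * ‖x - x₀‖ / s) := by ring
    rw [a13]
    linarith
  set F : ℝ → EuclideanSpace ℝ (Fin n) → ℝ := fun ε ρ => sInf (E '' {σ | σ ∈ K ∧ D ρ σ ≤ ε}) with hF
  have hFbdd : ∀ (ρ : EuclideanSpace ℝ (Fin n)) (ε : ℝ), BddBelow (E '' {σ | σ ∈ K ∧ D ρ σ ≤ ε}) := by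
    intro ρ ε
    refine ⟨0, ?_⟩
    rintro y ⟨σ, ⟨hσK, _⟩, rfl⟩
    exact hEnn σ hσK
  have hFne : ∀ ρ ∈ K, ∀ ε : ℝ, 0 ≤ ε → (E '' {σ | σ ∈ K ∧ D ρ σ ≤ ε}).Nonempty := by
    intro ρ hρ ε hε
    exact ⟨E ρ, ρ, ⟨hρ, by rw [show D ρ ρ = 0 from (hD0 ρ ρ).mpr rfl]; exact hε⟩, rfl⟩
  have hFmono : ∀ ρ ∈ K, ∀ ε ε' : ℝ, 0 ≤ ε → ε ≤ ε' → F ε' ρ ≤ F ε ρ := by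
    intro ρ hρ ε ε' hε hεε
    apply csInf_le_csInf (hFbdd ρ ε') (hFne ρ hρ ε hε)
    apply Set.image_mono
    rintro σ ⟨h1, h2⟩
    exact ⟨h1, h2.trans hεε⟩
  have hFle : ∀ (ρ : EuclideanSpace ℝ (Fin n)) (ε : ℝ) σ, σ ∈ K → D ρ σ ≤ ε → F ε ρ ≤ E σ :=
    fun ρ ε σ h1 h2 => csInf_le (hFbdd ρ ε) ⟨σ, ⟨h1, h2⟩, rfl⟩
  have hM0 : 0 ≤ M := le_trans (hEnn c hcK) (hM c hcK)
  have heps : ∀ ρ ∈ K, ∀ ε : ℝ, 0 ≤ ε → ∀ p : ℝ, 0 ≤ p → p ≤ 1 →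
      F ((1-p)*ε) ρ ≤ F ε ρ + p*M := by
    intro ρ hρ ε hε p hp0 hp1
    have key : ∀ y ∈ E '' {σ | σ ∈ K ∧ D ρ σ ≤ ε}, F ((1-p)*ε) ρ - p*M ≤ y := by
      rintro y ⟨σ, ⟨hσK, hσD⟩, rfl⟩
      have hσ'K : p • ρ + (1-p) • σ ∈ K := hKc hρ hσK hp0 (by linarith) (by ring)
      have hD' : D (p • ρ + (1-p) • σ) ρ ≤ p * D ρ ρ + (1-p) * D σ ρ :=
        hDconv ρ hρ σ hσK ρ hρ p hp0 hp1
      have hDρρ : D ρ ρ = 0 := (hD0 ρ ρ).mpr rfl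
      have hDσρ : D σ ρ = D ρ σ := hDsymm σ ρ
      have hfeas : D ρ (p • ρ + (1-p) • σ) ≤ (1-p)*ε := by
        rw [hDsymm]
        nlinarith
      have hEσ' : E (p • ρ + (1-p) • σ) ≤ p * E ρ + (1-p) * E σ := hEconv ρ hρ σ hσK p hp0 hp1
      have h1 : F ((1-p)*ε) ρ ≤ E (p • ρ + (1-p) • σ) := hFle ρ _ _ hσ'K hfeas
      have h2 : E ρ ≤ M := hM ρ hρ
      have h3 : 0 ≤ E σ := hEnn σ hσK
      nlinarith
    have := le_csInf (hFne ρ hρ ε hε) key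
    linarith
  -- transport estimate
  have hT2 : ∀ ε : ℝ, 0 ≤ ε → ∀ x ∈ K, ∀ x₀ ∈ K, ‖x - x₀‖ ≤ r₀/4 →
      F (ε + 6*B*Real.sqrt (‖x - x₀‖/r₀)) x ≤ F ε x₀ + M * Real.sqrt (‖x - x₀‖/r₀) := by
    intro ε hε x hx x₀ hx₀ hd
    by_cases hxx : x = x₀
    · subst hxx
      simp only [sub_self, norm_zero, zero_div, Real.sqrt_zero, mul_zero, add_zero]
      exact le_rfl
    · have hδpos : 0 < ‖x - x₀‖ := norm_pos_iff.mpr (sub_ne_zero_of_ne hxx)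
      set δ : ℝ := ‖x - x₀‖ with hδ
      set q : ℝ := Real.sqrt (δ/r₀) with hq
      have hq0 : 0 < q := Real.sqrt_pos.mpr (by positivity)
      have hqq : q * q = δ/r₀ := Real.mul_self_sqrt (by positivity)
      have hqhalf : q ≤ 1/2 := by
        rw [hq]
        have h14 : δ/r₀ ≤ 1/4 := by
          have h15 : δ/r₀ ≤ (r₀/4)/r₀ := by gcongr
          have h16 : (r₀/4)/r₀ = 1/4 := by field_simp
          linarith
        calc Real.sqrt (δ/r₀) ≤ Real.sqrt (1/4) := Real.sqrt_le_sqrt h14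
          _ = 1/2 := by
              rw [show (1/4:ℝ) = (1/2)^2 by norm_num, Real.sqrt_sq (by norm_num : (0:ℝ) ≤ 1/2)]
      have hq1 : q ≤ 1 := by linarith
      have hδeq : δ = q*q*r₀ := by rw [hqq]; field_simp
      have hδq : δ ≤ (q*r₀)/2 := by nlinarith
      have key : ∀ y ∈ E '' {σ | σ ∈ K ∧ D x₀ σ ≤ ε}, F (ε + 6*B*q) x - q*M ≤ y := by
        rintro y ⟨σ, ⟨hσK, hσD⟩, rfl⟩
        set σq := q • c + (1-q) • σ with hσq
        have hσqK : σq ∈ K := hKc hcK hσK hq0.le (by linarith) (by ring)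
        have hσqdeep : ∀ w ∈ V, ‖w‖ ≤ q*r₀ → σq + w ∈ K := by
          intro w hw hwn
          have hcw : c + q⁻¹ • w ∈ K := by
            apply hdeepc _ (Submodule.smul_mem _ _ hw)
            rw [norm_smul, Real.norm_eq_abs, abs_of_pos (by positivity)]
            calc q⁻¹ * ‖w‖ ≤ q⁻¹ * (q*r₀) := by gcongr
              _ = r₀ := by field_simp
          have heq : σq + w = q • (c + q⁻¹ • w) + (1-q) • σ := by
            rw [hσq]
            match_scalars <;> field_simp
          rw [heq]
          exact hKc hcw hσK hq0.le (by linarith) (by ring)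
        have hlipa : D x σq ≤ D x₀ σq + 5*B*δ/(q*r₀) :=
          hlip (q*r₀) (by positivity) σq hσqdeep x hx x₀ hx₀ (by rw [← hδ]; linarith)
        have hDcx₀ : D c x₀ ≤ B := hB c hcK x₀ hx₀
        have hDσx₀ : D σ x₀ ≤ ε := by rw [hDsymm]; exact hσD
        have hconv2 : D σq x₀ ≤ q * D c x₀ + (1-q) * D σ x₀ := by
          rw [hσq]; exact hDconv c hcK σ hσK x₀ hx₀ q hq0.le hq1
        have hlvl : D x σq ≤ ε + 6*B*q := by
          have h5 : 5*B*δ/(q*r₀) = 5*B*q := by rw [hδeq]; field_simp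
          have h6 : D x₀ σq = D σq x₀ := hDsymm _ _
          nlinarith
        have hEq : E σq ≤ E σ + q*M := by
          have hec := hEconv c hcK σ hσK q hq0.le hq1
          rw [← hσq] at hec
          have hEc : E c ≤ M := hM c hcK
          have hEσ : 0 ≤ E σ := hEnn σ hσK
          nlinarith
        have hFle2 : F (ε + 6*B*q) x ≤ E σq := hFle x _ σq hσqK hlvl
        linarith
      have hne := hFne x₀ hx₀ ε hε
      have := le_csInf hne key
      linarith
  -- final assembly
  rw [Metric.continuousOn_iff]
  rintro ⟨ε₀, ρ₀⟩ hq₀ τ hτ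
  obtain ⟨hε₀', hρ₀⟩ := Set.mem_prod.mp hq₀
  have hε₀ : 0 < ε₀ := hε₀'
  obtain ⟨δb, hδbpos, hδble, hsmall1, hsmall2⟩ :
      ∃ db > 0, db ≤ r₀/4 ∧
        (M*Real.sqrt (db/r₀) + (db + 6*B*Real.sqrt (db/r₀))*M/ε₀ < τ) ∧
        (db + 6*B*Real.sqrt (db/r₀) < ε₀/2) := by
    have hsq : Continuous fun t : ℝ => Real.sqrt (t/r₀) :=
      Real.continuous_sqrt.comp (continuous_id.div_const r₀)
    have hφc : Continuous fun t : ℝ =>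
        M*Real.sqrt (t/r₀) + (t + 6*B*Real.sqrt (t/r₀))*M/ε₀ + (t + 6*B*Real.sqrt (t/r₀)) :=
      ((continuous_const.mul hsq).add
        (((continuous_id.add (continuous_const.mul hsq)).mul continuous_const).div_const ε₀)).add
        (continuous_id.add (continuous_const.mul hsq))
    have hφ0' : M*Real.sqrt ((0:ℝ)/r₀) + ((0:ℝ) + 6*B*Real.sqrt ((0:ℝ)/r₀))*M/ε₀
        + ((0:ℝ) + 6*B*Real.sqrt ((0:ℝ)/r₀)) = 0 := by simp
    have hmem : (fun t : ℝ =>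
        M*Real.sqrt (t/r₀) + (t + 6*B*Real.sqrt (t/r₀))*M/ε₀ + (t + 6*B*Real.sqrt (t/r₀))) ⁻¹'
          (Iio (min τ (ε₀/2))) ∈ nhds (0:ℝ) := by
      apply hφc.continuousAt.preimage_mem_nhds
      apply Iio_mem_nhds
      show M*Real.sqrt ((0:ℝ)/r₀) + ((0:ℝ) + 6*B*Real.sqrt ((0:ℝ)/r₀))*M/ε₀
          + ((0:ℝ) + 6*B*Real.sqrt ((0:ℝ)/r₀)) < min τ (ε₀/2)
      rw [hφ0']
      exact lt_min hτ (by positivity)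
    obtain ⟨δ₁, hδ₁, hball₂⟩ := Metric.mem_nhds_iff.mp hmem
    have hdbpos : 0 < min (δ₁/2) (r₀/4) := lt_min (by positivity) (by positivity)
    have hdbφ : (fun t : ℝ =>
        M*Real.sqrt (t/r₀) + (t + 6*B*Real.sqrt (t/r₀))*M/ε₀ + (t + 6*B*Real.sqrt (t/r₀)))
          (min (δ₁/2) (r₀/4)) < min τ (ε₀/2) := by
      apply hball₂
      simp only [mem_ball, Real.dist_eq, sub_zero]
      rw [abs_of_pos hdbpos]
      calc min (δ₁/2) (r₀/4) ≤ δ₁/2 := min_le_left _ _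
        _ < δ₁ := by linarith
    simp only at hdbφ
    have hs0 : 0 ≤ Real.sqrt (min (δ₁/2) (r₀/4)/r₀) := Real.sqrt_nonneg _
    have ht1 : 0 ≤ M*Real.sqrt (min (δ₁/2) (r₀/4)/r₀) := mul_nonneg hM0 hs0
    have ht2 : 0 ≤ 6*B*Real.sqrt (min (δ₁/2) (r₀/4)/r₀) :=
      mul_nonneg (by nlinarith) hs0
    have ht3 : 0 ≤ (min (δ₁/2) (r₀/4) + 6*B*Real.sqrt (min (δ₁/2) (r₀/4)/r₀))*M/ε₀ := by
      apply div_nonneg _ hε₀.le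
      apply mul_nonneg _ hM0
      linarith
    refine ⟨min (δ₁/2) (r₀/4), hdbpos, min_le_right _ _, ?_, ?_⟩
    · have := min_le_left τ (ε₀/2)
      linarith
    · have := min_le_right τ (ε₀/2)
      linarith
  refine ⟨δb, hδbpos, ?_⟩
  rintro ⟨ε, ρ⟩ hqmem hdist
  obtain ⟨hεI, hρ⟩ := Set.mem_prod.mp hqmem
  have hε : 0 < ε := hεI
  have hdε : |ε - ε₀| < δb := by
    rw [← Real.dist_eq]
    refine lt_of_le_of_lt ?_ hdist
    rw [Prod.dist_eq]
    exact le_max_left _ _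
  have hδρ : ‖ρ - ρ₀‖ < δb := by
    rw [← dist_eq_norm]
    refine lt_of_le_of_lt ?_ hdist
    rw [Prod.dist_eq]
    exact le_max_right _ _
  have hεl : ε₀ - δb < ε := by
    have := abs_sub_lt_iff.mp hdε
    linarith [this.2]
  have hεh : ε < ε₀ + δb := by
    have := abs_sub_lt_iff.mp hdε
    linarith [this.1]
  set β : ℝ := Real.sqrt (‖ρ - ρ₀‖/r₀) with hβ
  set βb : ℝ := Real.sqrt (δb/r₀) with hβb
  have hβ0 : 0 ≤ β := Real.sqrt_nonneg _
  have hβb0 : 0 ≤ βb := Real.sqrt_nonneg _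
  have hββb : β ≤ βb := by
    rw [hβ, hβb]
    apply Real.sqrt_le_sqrt
    gcongr
  have h6Bβ : 0 ≤ 6*B*β := mul_nonneg (by nlinarith) hβ0
  have h6Bβb : 0 ≤ 6*B*βb := mul_nonneg (by nlinarith) hβb0
  have hBβmono : 6*B*β ≤ 6*B*βb := by nlinarith
  have h2' : δb + 6*B*β ≤ ε₀/2 := by linarith
  -- upper estimate
  have u1 : F ε ρ ≤ F (ε₀ - δb) ρ := hFmono ρ hρ (ε₀ - δb) ε (by linarith) (by linarith)
  have u2 : F (ε₀ - δb) ρ ≤ F (ε₀ - δb - 6*B*β) ρ₀ + M*β := by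
    have h := hT2 (ε₀ - δb - 6*B*β) (by linarith) ρ hρ ρ₀ hρ₀ (by linarith)
    rw [← hβ] at h
    rw [show ε₀ - δb - 6*B*β + 6*B*β = ε₀ - δb from by ring] at h
    exact h
  have u3 : F (ε₀ - δb - 6*B*β) ρ₀ ≤ F ε₀ ρ₀ + ((δb + 6*B*β)/ε₀)*M := by
    have h := heps ρ₀ hρ₀ ε₀ hε₀.le ((δb + 6*B*β)/ε₀) (by positivity)
      (by rw [div_le_one hε₀]; linarith)
    rw [show (1 - (δb + 6*B*β)/ε₀)*ε₀ = ε₀ - δb - 6*B*β from by field_simp; ring] at h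
    exact h
  have hd1 : ((δb + 6*B*β)/ε₀)*M ≤ ((δb + 6*B*βb)/ε₀)*M := by
    gcongr
  have hd2 : M*β ≤ M*βb := by nlinarith
  have hring : ((δb + 6*B*βb)/ε₀)*M = (δb + 6*B*βb)*M/ε₀ := by ring
  have hupper : F ε ρ - F ε₀ ρ₀ < τ := by
    have hs1 := hsmall1
    nlinarith [u1, u2, u3, hd1, hd2]
  -- lower estimate
  have l1 : F (ε + 6*B*β) ρ₀ ≤ F ε ρ + M*β := by
    have h := hT2 ε hε.le ρ₀ hρ₀ ρ hρ (by rw [norm_sub_rev]; linarith)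
    rw [norm_sub_rev ρ₀ ρ, ← hβ] at h
    exact h
  have l2 : F (ε₀ + δb + 6*B*βb) ρ₀ ≤ F (ε + 6*B*β) ρ₀ := by
    apply hFmono ρ₀ hρ₀ (ε + 6*B*β) (ε₀ + δb + 6*B*βb) (by linarith) (by linarith)
  have hdenpos : 0 < ε₀ + δb + 6*B*βb := by linarith
  have l3 : F ε₀ ρ₀ ≤ F (ε₀ + δb + 6*B*βb) ρ₀ + ((δb + 6*B*βb)/(ε₀ + δb + 6*B*βb))*M := by
    have h := heps ρ₀ hρ₀ (ε₀ + δb + 6*B*βb) (by linarith)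
      ((δb + 6*B*βb)/(ε₀ + δb + 6*B*βb)) (by positivity)
      (by rw [div_le_one hdenpos]; linarith)
    rw [show (1 - (δb + 6*B*βb)/(ε₀ + δb + 6*B*βb))*(ε₀ + δb + 6*B*βb) = ε₀ from by
      field_simp; ring] at h
    exact h
  have l4 : ((δb + 6*B*βb)/(ε₀ + δb + 6*B*βb))*M ≤ ((δb + 6*B*βb)/ε₀)*M := by
    apply mul_le_mul_of_nonneg_right _ hM0
    apply div_le_div_of_nonneg_left (by linarith) hε₀ (by linarith)
  have hlower : F ε₀ ρ₀ - F ε ρ < τ := by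
    have hs1 := hsmall1
    nlinarith [l1, l2, l3, l4, hd2]
  show dist (F ε ρ) (F ε₀ ρ₀) < τ
  rw [Real.dist_eq, abs_sub_lt_iff]
  exact ⟨hupper, hlower⟩
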